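/- Let k be a field of characteristic p, G a finite group, and V a finite-dimensional kG-module with stable endomorphism ring isomorphic to k. Let R be an Artinian local commutative ring with residue field k and let (M, φ) be a lift of V over R (M a finite free R-module with G-action, φ : k ⊗_R M ≅ V equivariant). Then the natural ring homomorphism R → End_{RG}(M)/PEnd_{RG}(M) given by scalar multiplication is surjective. -/

import Mathlib

/-- An endomorphism of a module over a ring `A` factors through a projective `A`-module. -/
def FactorsThroughProjective (A : Type) [Ring A] {M : Type} [AddCommGroup M] [Module A M]
    (f : M →ₗ[A] M) : Prop :=
  ∃ (P : Type) (_ : AddCommGroup P) (_ : Module A P),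
    Module.Projective A P ∧ ∃ (α : M →ₗ[A] P) (β : P →ₗ[A] M), f = β.comp α

/-- The stable endomorphism ring `End_A(M)/PEnd_A(M)` is isomorphic to `k`. -/
def StableEndTrivial (k : Type) [Field k] (A : Type) [Ring A] (M : Type) [AddCommGroup M]
    [Module k M] [Module A M] [SMulCommClass A k M] : Prop :=
  (¬ FactorsThroughProjective A (LinearMap.id : M →ₗ[A] M)) ∧
  ∀ f : M →ₗ[A] M, ∃ a : k, FactorsThroughProjective A (f - a • LinearMap.id)

section Helpers

variable (A : Type) [CommRing A] (G : Type) [Group G]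
variable {N : Type} [AddCommGroup N] [Module A N] [Module (MonoidAlgebra A G) N]
  [IsScalarTower A (MonoidAlgebra A G) N]
variable {P : Type} [AddCommGroup P] [Module A P] [Module (MonoidAlgebra A G) P]
  [IsScalarTower A (MonoidAlgebra A G) P]

/-- Upgrade an `A`-linear `G`-equivariant map to a `MonoidAlgebra A G`-linear map. -/
def mkEquivariant (f : N →ₗ[A] P)
    (hf : ∀ (g : G) (n : N), f (MonoidAlgebra.of A G g • n) = MonoidAlgebra.of A G g • f n) :
    N →ₗ[MonoidAlgebra A G] P where
  toFun := f
  map_add' := f.map_add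
  map_smul' a n := by
    simp only [RingHom.id_apply]
    induction a using MonoidAlgebra.induction_on with
    | of g => exact hf g n
    | add x y hx hy => rw [add_smul, add_smul, map_add, hx, hy]
    | smul r x hx => rw [smul_assoc, smul_assoc, f.map_smul, hx]

@[simp] lemma mkEquivariant_apply (f : N →ₗ[A] P) (hf) (n : N) :
    mkEquivariant A G f hf n = f n := rfl

end Helpers

section Trace

variable (A : Type) [CommRing A] (G : Type) [Group G] [Fintype G]
variable {N : Type} [AddCommGroup N] [Module A N] [Module (MonoidAlgebra A G) N]
  [IsScalarTower A (MonoidAlgebra A G) N] [SMulCommClass (MonoidAlgebra A G) A N]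

/-- Action of a group element as an `A`-linear map. -/
noncomputable def rhoG (g : G) : N →ₗ[A] N where
  toFun n := MonoidAlgebra.of A G g • n
  map_add' x y := smul_add _ x y
  map_smul' a n := by
    show MonoidAlgebra.of A G g • (a • n) = a • MonoidAlgebra.of A G g • n
    exact smul_comm _ a n

@[simp] lemma rhoG_apply (g : G) (n : N) :
    rhoG A G g n = MonoidAlgebra.of A G g • n := rfl

/-- The trace (relative norm) of an `A`-linear endomorphism. -/
noncomputable def trLin (u : N →ₗ[A] N) : N →ₗ[A] N :=
  ∑ g : G, (rhoG A G g) ∘ₗ u ∘ₗ (rhoG A G g⁻¹)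

lemma trLin_apply (u : N →ₗ[A] N) (n : N) :
    trLin A G u n = ∑ g : G, MonoidAlgebra.of A G g • u (MonoidAlgebra.of A G g⁻¹ • n) := by
  simp [trLin, LinearMap.sum_apply]

lemma trLin_equivariant (u : N →ₗ[A] N) (h : G) (n : N) :
    trLin A G u (MonoidAlgebra.of A G h • n) = MonoidAlgebra.of A G h • trLin A G u n := by
  rw [trLin_apply, trLin_apply, Finset.smul_sum]
  rw [← Finset.sum_bij (fun g _ => h * g) (fun g _ => Finset.mem_univ _)
    (fun g₁ _ g₂ _ e => by simpa using e)
    (fun g _ => ⟨h⁻¹ * g, Finset.mem_univ _, by simp [mul_assoc]⟩)]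
  intro g _
  have e : (h * g)⁻¹ * h = g⁻¹ := by group
  simp only [smul_smul, ← map_mul, e]

/-- The trace as a `MonoidAlgebra A G`-linear map. -/
noncomputable def trRG (u : N →ₗ[A] N) : N →ₗ[MonoidAlgebra A G] N :=
  mkEquivariant A G (trLin A G u) (trLin_equivariant A G u)

lemma trRG_apply (u : N →ₗ[A] N) (n : N) :
    trRG A G u n = ∑ g : G, MonoidAlgebra.of A G g • u (MonoidAlgebra.of A G g⁻¹ • n) :=
  trLin_apply A G u n

end Trace

section FTP

variable {B : Type} [Ring B] {M : Type} [AddCommGroup M] [Module B M]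

lemma ftp_zero : FactorsThroughProjective B (0 : M →ₗ[B] M) :=
  ⟨PUnit, inferInstance, inferInstance, inferInstance, 0, 0, by ext m; simp⟩

lemma ftp_add {f g : M →ₗ[B] M} (hf : FactorsThroughProjective B f)
    (hg : FactorsThroughProjective B g) : FactorsThroughProjective B (f + g) := by
  obtain ⟨P₁, _, _, hP₁, α₁, β₁, rfl⟩ := hf
  obtain ⟨P₂, _, _, hP₂, α₂, β₂, rfl⟩ := hg
  exact ⟨P₁ × P₂, inferInstance, inferInstance, inferInstance,
    LinearMap.prod α₁ α₂, LinearMap.coprod β₁ β₂, by ext m; simp⟩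

end FTP

section TraceFTP

variable (A : Type) [CommRing A] (G : Type) [Group G] [Fintype G]
variable {N : Type} [AddCommGroup N] [Module A N] [Module (MonoidAlgebra A G) N]
  [IsScalarTower A (MonoidAlgebra A G) N] [SMulCommClass (MonoidAlgebra A G) A N]

lemma ftp_trRG {ι : Type} [Fintype ι] (b : Module.Basis ι A N) (u : N →ₗ[A] N) :
    FactorsThroughProjective (MonoidAlgebra A G) (trRG A G u) := by
  classical
  set AG := MonoidAlgebra A G
  -- the free `AG`-module on the basis of `N`
  refine ⟨ι →₀ AG, inferInstance, inferInstance, inferInstance, ?_, ?_, ?_⟩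
  · -- α
    refine mkEquivariant A G
      (∑ g : G, (Finsupp.mapRange.linearMap (LinearMap.toSpanSingleton A AG
          (MonoidAlgebra.of A G g))) ∘ₗ (b.repr.toLinearMap) ∘ₗ u ∘ₗ rhoG A G g⁻¹) ?_
    intro h n
    have key : ∀ (h g : G) (w : ι →₀ A),
        MonoidAlgebra.of A G h • (Finsupp.mapRange.linearMap (LinearMap.toSpanSingleton A AG
          (MonoidAlgebra.of A G g)) w)
        = Finsupp.mapRange.linearMap (LinearMap.toSpanSingleton A AG
          (MonoidAlgebra.of A G (h * g))) w := by
      intro h g w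
      refine Finsupp.ext fun t => ?_
      simp only [Finsupp.mapRange.linearMap_apply, Finsupp.smul_apply, Finsupp.mapRange_apply,
        LinearMap.toSpanSingleton_apply, smul_eq_mul]
      rw [mul_smul_comm, ← map_mul]
    simp only [LinearMap.sum_apply, LinearMap.comp_apply, rhoG_apply, Finsupp.smul_sum,
      Finset.smul_sum]
    rw [← Finset.sum_bij (fun g _ => h * g) (fun g _ => Finset.mem_univ _)
      (fun g₁ _ g₂ _ e => by simpa using e)
      (fun g _ => ⟨h⁻¹ * g, Finset.mem_univ _, by simp [mul_assoc]⟩)]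
    intro g _
    have e : (h * g)⁻¹ * h = g⁻¹ := by group
    rw [smul_smul, ← map_mul, e, key]
  · exact Finsupp.linearCombination AG (fun t => b t)
  · ext n
    simp only [LinearMap.comp_apply, mkEquivariant_apply, LinearMap.sum_apply, map_sum]
    rw [trRG_apply]
    refine Finset.sum_congr rfl fun g _ => ?_
    simp only [LinearMap.comp_apply, rhoG_apply]
    rw [Finsupp.linearCombination_apply, Finsupp.mapRange.linearMap_apply,
      Finsupp.sum_mapRange_index (by simp)]
    have : ∀ (w : ι →₀ A),
        (w.sum fun t c => LinearMap.toSpanSingleton A AG (MonoidAlgebra.of A G g) c • b t)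
          = MonoidAlgebra.of A G g • (Finsupp.linearCombination A (fun t => b t) w) := by
      intro w
      rw [Finsupp.linearCombination_apply, Finsupp.smul_sum]
      refine Finsupp.sum_congr fun t _ => ?_
      rw [LinearMap.toSpanSingleton_apply, smul_assoc, smul_comm]
    rw [this]
    congr 1
    have := b.linearCombination_repr (u (MonoidAlgebra.of A G g⁻¹ • n))
    simpa using this

end TraceFTP

section Higman

variable (A : Type) [CommRing A] (G : Type) [Group G] [Fintype G]
variable {N : Type} [AddCommGroup N] [Module A N] [Module (MonoidAlgebra A G) N]
  [IsScalarTower A (MonoidAlgebra A G) N] [SMulCommClass (MonoidAlgebra A G) A N]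

/-- Extraction of the coefficient at `1`, as an `A`-linear endomorphism of `MonoidAlgebra A G`. -/
noncomputable def coeffOne : MonoidAlgebra A G →ₗ[A] MonoidAlgebra A G where
  toFun a := MonoidAlgebra.single 1 (a.coeff 1)
  map_add' a b := by
    show MonoidAlgebra.single 1 ((a + b).coeff 1) = _
    rw [MonoidAlgebra.coeff_add, Finsupp.add_apply, MonoidAlgebra.single_add]
  map_smul' r a := by
    show MonoidAlgebra.single 1 ((r • a).coeff 1) = r • MonoidAlgebra.single 1 (a.coeff 1)
    rw [MonoidAlgebra.smul_single', MonoidAlgebra.coeff_smul_apply, smul_eq_mul]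

lemma ftp_eq_tr (f : N →ₗ[MonoidAlgebra A G] N)
    (hf : FactorsThroughProjective (MonoidAlgebra A G) f) :
    ∃ u : N →ₗ[A] N, ∀ n : N,
      f n = ∑ g : G, MonoidAlgebra.of A G g • u (MonoidAlgebra.of A G g⁻¹ • n) := by
  classical
  obtain ⟨P, _, _, hP, α, β, rfl⟩ := hf
  set AG := MonoidAlgebra A G
  obtain ⟨s, hs⟩ := Module.projective_def.mp hP
  set F := P →₀ AG
  set A' : N →ₗ[AG] F := s ∘ₗ α with hA'
  set B : F →ₗ[AG] N := β ∘ₗ Finsupp.linearCombination AG id with hB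
  have hBA : ∀ n, B (A' n) = β (α n) := by
    intro n
    simp only [hA', hB, LinearMap.comp_apply]
    rw [hs (α n)]
  set L : F →ₗ[A] F := Finsupp.mapRange.linearMap (coeffOne A G) with hL
  have key : ∀ w : F, ∑ g : G, MonoidAlgebra.of A G g • L (MonoidAlgebra.of A G g⁻¹ • w) = w := by
    intro w
    refine Finsupp.ext fun t => ?_
    rw [Finsupp.finset_sum_apply]
    have : ∀ g : G, (MonoidAlgebra.of A G g • L (MonoidAlgebra.of A G g⁻¹ • w)) t
        = (MonoidAlgebra.single g ((w t).coeff g) : AG) := by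
      intro g
      rw [Finsupp.smul_apply, hL, Finsupp.mapRange.linearMap_apply, Finsupp.mapRange_apply,
        Finsupp.smul_apply]
      show MonoidAlgebra.of A G g * MonoidAlgebra.single 1 ((MonoidAlgebra.of A G g⁻¹ * w t).coeff 1) = _
      rw [MonoidAlgebra.of_apply, MonoidAlgebra.of_apply]
      rw [MonoidAlgebra.coeff_single_mul_eq_mul_coeff (m₂ := g) (fun a _ => by
        constructor
        · intro h; simpa using congrArg (fun z => g * z) h
        · rintro rfl; simp)]
      rw [one_mul]
      rw [MonoidAlgebra.single_mul_single, mul_one, one_mul]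
    rw [Finset.sum_congr rfl fun g _ => this g]
    apply MonoidAlgebra.coeff_injective
    rw [MonoidAlgebra.coeff_sum]
    simp only [MonoidAlgebra.coeff_single]
    rw [← Finsupp.sum_fintype (w t).coeff (fun g c => Finsupp.single g c) (by simp)]
    exact Finsupp.sum_single (w t).coeff
  refine ⟨(B.restrictScalars A) ∘ₗ L ∘ₗ (A'.restrictScalars A), fun n => ?_⟩
  have : ∀ g : G, MonoidAlgebra.of A G g •
      ((B.restrictScalars A) ∘ₗ L ∘ₗ (A'.restrictScalars A)) (MonoidAlgebra.of A G g⁻¹ • n)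
      = B (MonoidAlgebra.of A G g • L (MonoidAlgebra.of A G g⁻¹ • A' n)) := by
    intro g
    simp only [LinearMap.comp_apply, LinearMap.restrictScalars_apply]
    rw [map_smul A' (MonoidAlgebra.of A G g⁻¹) n]
    rw [← map_smul B]
  rw [Finset.sum_congr rfl fun g _ => this g, ← map_sum, key, hBA]
  rfl

section Coord

lemma mem_ideal_smul_top_iff {R : Type} [CommRing R] {M : Type} [AddCommGroup M] [Module R M]
    {ι : Type*} (b : Module.Basis ι R M) (J : Ideal R) (m : M) :
    m ∈ J • (⊤ : Submodule R M) ↔ ∀ t, b.repr m t ∈ J := by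
  rw [← b.span_eq, Submodule.mem_ideal_smul_span_iff_exists_sum]
  constructor
  · rintro ⟨a, ha, rfl⟩ t
    have : (a.sum fun i c => c • b i) = Finsupp.linearCombination R (⇑b) a := by
      rw [Finsupp.linearCombination_apply]
    rw [this, b.repr_linearCombination]
    exact ha t
  · intro hcoords
    refine ⟨b.repr m, hcoords, ?_⟩
    have : (b.repr m).sum (fun i c => c • b i) = Finsupp.linearCombination R (⇑b) (b.repr m) := by
      rw [Finsupp.linearCombination_apply]
    rw [this, b.linearCombination_repr]

end Coord
/-- Let `V` be a `kG`-module with stable endomorphism ring `k`, let `R` be an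
Artinian local commutative ring with residue field `k`, and let `(M, φ)` be a lift of `V` over
`R`: `M` a finite free `R`-module with `RG`-action and `φ : k ⊗_R M ≅ V` a `G`-equivariant
identification (realized as a surjective `G`-equivariant `πR`-semilinear map `φ : M → V` with
kernel `m_R·M`). Then the natural map `R → End_{RG}(M)/PEnd_{RG}(M)` given by scalar
multiplication is surjective. -/
theorem scalar_action_surjects_onto_stable_end
    (p : ℕ) [Fact p.Prime] (k : Type) [Field k] [CharP k p]
    (G : Type) [Group G] [Fintype G]
    (V : Type) [AddCommGroup V] [Module k V] [Module (MonoidAlgebra k G) V]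
    [IsScalarTower k (MonoidAlgebra k G) V] [SMulCommClass (MonoidAlgebra k G) k V]
    [Module.Finite k V]
    (hV : StableEndTrivial k (MonoidAlgebra k G) V)
    (R : Type) [CommRing R] [IsLocalRing R] [IsArtinianRing R]
    (πR : R →+* k) (hπsurj : Function.Surjective πR)
    (hπker : RingHom.ker πR = IsLocalRing.maximalIdeal R)
    (M : Type) [AddCommGroup M] [Module R M] [Module (MonoidAlgebra R G) M]
    [IsScalarTower R (MonoidAlgebra R G) M] [SMulCommClass (MonoidAlgebra R G) R M]
    [Module.Free R M] [Module.Finite R M]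
    (φ : M →ₛₗ[πR] V) (hφsurj : Function.Surjective φ)
    (hφker : ∀ m : M, φ m = 0 ↔ m ∈ (IsLocalRing.maximalIdeal R) • (⊤ : Submodule R M))
    (hφequiv : ∀ (g : G) (m : M),
      φ ((MonoidAlgebra.of R G g) • m) = (MonoidAlgebra.of k G g) • φ m) :
    ∀ f : M →ₗ[MonoidAlgebra R G] M, ∃ r : R,
      FactorsThroughProjective (MonoidAlgebra R G)
        (f - r • (LinearMap.id : M →ₗ[MonoidAlgebra R G] M)) := by
  classical
  intro f
  set I : Ideal R := IsLocalRing.maximalIdeal R with hIdef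
  obtain ⟨n, hIn⟩ : IsNilpotent I := by
    have h1 := IsArtinianRing.isNilpotent_jacobson_bot (R := R)
    rwa [IsLocalRing.jacobson_eq_maximalIdeal ⊥ bot_ne_top] at h1
  set b := Module.Free.chooseBasis R M with hbdef
  -- R-linearity of MonoidAlgebra-linear maps
  have hsmulR : ∀ (h : M →ₗ[MonoidAlgebra R G] M) (r : R) (m : M), h (r • m) = r • h m := by
    intro h r m
    have e : r • m = (r • (1 : MonoidAlgebra R G)) • m := by rw [smul_assoc, one_smul]
    rw [e, map_smul, smul_assoc, one_smul]
  -- RG-linear maps push ideal-scalars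
  have hmapsmul : ∀ (h : M →ₗ[MonoidAlgebra R G] M) (J J' : Ideal R),
      (∀ m, h m ∈ J' • (⊤ : Submodule R M)) →
      ∀ m ∈ J • (⊤ : Submodule R M), h m ∈ (J • J') • (⊤ : Submodule R M) := by
    intro h J J' hh m hm
    refine Submodule.smul_induction_on hm ?_ ?_
    · intro r hr x _
      rw [hsmulR]
      have h2 : r • h x ∈ J • (J' • (⊤ : Submodule R M)) := Submodule.smul_mem_smul hr (hh x)
      rwa [← Submodule.smul_assoc] at h2
    · intro x y hx hy; rw [map_add]; exact Submodule.add_mem _ hx hy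
  -- J • ⊤ is a MonoidAlgebra-submodule
  have hgstab : ∀ (J : Ideal R) (a : MonoidAlgebra R G) (m : M),
      m ∈ J • (⊤ : Submodule R M) → a • m ∈ J • (⊤ : Submodule R M) := by
    intro J a m hm
    refine Submodule.smul_induction_on hm (fun r hr x _ => ?_) (fun x y hx hy => ?_)
    · rw [smul_comm]
      exact Submodule.smul_mem_smul hr trivial
    · rw [smul_add]; exact Submodule.add_mem _ hx hy
  have key : ∀ J : Ideal R, ∀ h : M →ₗ[MonoidAlgebra R G] M,
      (∀ m, h m ∈ J • (⊤ : Submodule R M)) →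
      ∃ r : R, FactorsThroughProjective (MonoidAlgebra R G)
        (h - r • (LinearMap.id : M →ₗ[MonoidAlgebra R G] M)) := by
    intro J
    induction J using WellFoundedLT.induction with
    | _ J IH => ?_
    intro h hh
    by_cases hJ : J ≤ I • J
    · -- then J = ⊥ and h = 0
      have hpow : ∀ i : ℕ, J ≤ I ^ i • J := by
        intro i
        induction i with
        | zero => rw [pow_zero, Ideal.one_eq_top, Submodule.top_smul]
        | succ i ih =>
          have e : (I • I ^ i : Ideal R) = I ^ (i + 1) := by
            rw [Ideal.smul_eq_mul, ← pow_succ']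
          calc J ≤ I • J := hJ
          _ ≤ I • (I ^ i • J) := smul_mono_right I ih
          _ = (I • I ^ i) • J := (Submodule.smul_assoc _ _ _).symm
          _ = I ^ (i + 1) • J := by rw [e]
      have hJbot : J = ⊥ := by
        have := hpow n
        rw [hIn, Ideal.zero_eq_bot, Submodule.bot_smul, le_bot_iff] at this
        exact this
      have hzero : h = 0 := by
        apply LinearMap.ext
        intro m
        have := hh m
        rw [hJbot, Submodule.bot_smul] at this
        simpa using this
      exact ⟨0, by rw [hzero, zero_smul, sub_zero]; exact ftp_zero⟩
    · obtain ⟨x, hxJ, hxIJ⟩ := SetLike.not_le_iff_exists.mp hJ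
      -- maximal ideal avoiding x
      set S : Set (Ideal R) := {J' | J' ≤ J ∧ I • J ≤ J' ∧ x ∉ J'} with hSdef
      have hZorn : ∃ J', I • J ≤ J' ∧ Maximal (· ∈ S) J' := by
        refine zorn_le_nonempty₀ S ?_ (I • J) ⟨Submodule.smul_le_right, le_refl _, hxIJ⟩
        intro c hcS hchain y hyc
        refine ⟨sSup c, ⟨?_, ?_, ?_⟩, fun z hz => le_sSup hz⟩
        · exact sSup_le fun z hz => (hcS hz).1
        · exact le_trans (hcS hyc).2.1 (le_sSup hyc)
        · intro hxmem
          obtain ⟨z, hzc, hxz⟩ := (Submodule.mem_sSup_of_directed ⟨y, hyc⟩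
            (hchain.directedOn)).mp hxmem
          exact (hcS hzc).2.2 hxz
      obtain ⟨J', -, hJ'max⟩ := hZorn
      obtain ⟨hJ'leJ, hIJle, hxJ'⟩ := hJ'max.1
      have hJ'lt : J' < J := lt_of_le_of_ne hJ'leJ (fun e => hxJ' (e ▸ hxJ))
      -- J ≤ J' ⊔ (x)
      have hsup : J ≤ J' ⊔ Ideal.span {x} := by
        intro y hyJ
        by_contra hy
        have hyS : J' ⊔ Ideal.span {y} ∈ S := by
          refine ⟨sup_le hJ'leJ ((Ideal.span_singleton_le_iff_mem J).mpr hyJ),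
            le_trans hIJle le_sup_left, ?_⟩
          intro hx
          obtain ⟨a, ha, bb, hbb, hab⟩ := Submodule.mem_sup.mp hx
          obtain ⟨r, hr⟩ := Ideal.mem_span_singleton'.mp hbb
          by_cases hrI : r ∈ I
          · apply hxJ'
            have : bb ∈ J' := by
              rw [← hr]
              have : r • y ∈ I • J := Submodule.smul_mem_smul hrI hyJ
              rw [smul_eq_mul] at this
              exact hIJle this
            rw [← hab]
            exact Submodule.add_mem _ ha this
          · have hru : IsUnit r := IsLocalRing.notMem_maximalIdeal.mp hrI
            apply hy
            have h1 : x - a ∈ J' ⊔ Ideal.span {x} :=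
              Submodule.sub_mem _
                (Submodule.mem_sup_right (Ideal.mem_span_singleton_self x))
                (Submodule.mem_sup_left ha)
            have e1 : x - a = r * y := by rw [← hab, ← hr]; ring
            have h2 : (↑hru.unit⁻¹ : R) * (x - a) ∈ J' ⊔ Ideal.span {x} :=
              Ideal.mul_mem_left _ _ h1
            rw [e1, ← mul_assoc, IsUnit.val_inv_mul, one_mul] at h2
            exact h2
        have h3 : J' ⊔ Ideal.span {y} ≤ J' := hJ'max.2 hyS le_sup_left
        exact hy (Submodule.mem_sup_left
          (h3 (Submodule.mem_sup_right (Ideal.mem_span_singleton_self y))))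
      -- colon fact
      have hcolon : ∀ c : R, x * c ∈ J' → c ∈ I := by
        intro c hc
        by_contra hcI
        have hcu : IsUnit c := IsLocalRing.notMem_maximalIdeal.mp hcI
        apply hxJ'
        have : x * c * ↑hcu.unit⁻¹ ∈ J' := Ideal.mul_mem_right _ _ hc
        rwa [mul_assoc, IsUnit.mul_val_inv, mul_one] at this
      -- uniqueness
      have hU : ∀ c : M, x • c ∈ J' • (⊤ : Submodule R M) → φ c = 0 := by
        intro c hc
        rw [hφker]
        rw [mem_ideal_smul_top_iff b]
        intro t
        have h1 := (mem_ideal_smul_top_iff b J' _).mp hc t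
        rw [map_smul, Finsupp.smul_apply, smul_eq_mul] at h1
        exact hcolon _ h1
      -- decomposition
      have hdecomp : ∀ m : M, ∃ m' c : M,
          h m = m' + x • c ∧ m' ∈ J' • (⊤ : Submodule R M) := by
        intro m
        have h1 : h m ∈ (J' ⊔ Ideal.span {x}) • (⊤ : Submodule R M) :=
          Submodule.smul_mono_left hsup (hh m)
        rw [Submodule.sup_smul] at h1
        obtain ⟨m', hm', z, hz, hsum⟩ := Submodule.mem_sup.mp h1
        have h2 : ∃ c : M, z = x • c := by
          refine Submodule.smul_induction_on hz ?_ ?_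
          · intro r hr y _
            obtain ⟨r', hr'⟩ := Ideal.mem_span_singleton'.mp hr
            exact ⟨r' • y, by rw [← hr', mul_comm, mul_smul]⟩
          · rintro y₁ y₂ ⟨c₁, rfl⟩ ⟨c₂, rfl⟩
            exact ⟨c₁ + c₂, by rw [smul_add]⟩
        obtain ⟨c, rfl⟩ := h2
        exact ⟨m', c, hsum.symm, hm'⟩
      choose mof cof hdec hdecJ' using hdecomp
      choose sec hsec using hφsurj
      set wfun : V → V := fun v => φ (cof (sec v)) with hwfun
      have hw : ∀ (m c : M), h m - x • c ∈ J' • (⊤ : Submodule R M) → φ c = wfun (φ m) := by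
        intro m c hc
        have h1 : φ (m - sec (φ m)) = 0 := by rw [map_sub, hsec, sub_self]
        have h2 : m - sec (φ m) ∈ I • (⊤ : Submodule R M) := (hφker _).mp h1
        have h3 : h (m - sec (φ m)) ∈ (I • J) • (⊤ : Submodule R M) := hmapsmul h I J hh _ h2
        have h4 : h (m - sec (φ m)) ∈ J' • (⊤ : Submodule R M) :=
          Submodule.smul_mono_left hIJle h3
        have e2 : h (sec (φ m)) - x • cof (sec (φ m)) ∈ J' • (⊤ : Submodule R M) := by
          rw [hdec (sec (φ m))]; simpa using hdecJ' (sec (φ m))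
        have h5 : x • (c - cof (sec (φ m))) ∈ J' • (⊤ : Submodule R M) := by
          have e : x • (c - cof (sec (φ m)))
              = (h (sec (φ m)) - x • cof (sec (φ m))) - (h m - x • c) + (h (m - sec (φ m))) := by
            rw [map_sub, smul_sub]
            abel
          rw [e]
          exact Submodule.add_mem _ (Submodule.sub_mem _ e2 hc) h4
        have h6 := hU _ h5
        rw [map_sub, sub_eq_zero] at h6
        rw [h6, hwfun]
      -- linearity and equivariance of wfun
      have hwspec : ∀ m : M, φ (cof m) = wfun (φ m) := by
        intro m
        refine hw m (cof m) ?_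
        rw [hdec m]; simpa using hdecJ' m
      have hwadd : ∀ v₁ v₂ : V, wfun (v₁ + v₂) = wfun v₁ + wfun v₂ := by
        intro v₁ v₂
        have h1 : h (sec v₁ + sec v₂) - x • (cof (sec v₁) + cof (sec v₂))
            ∈ J' • (⊤ : Submodule R M) := by
          have e : h (sec v₁ + sec v₂) - x • (cof (sec v₁) + cof (sec v₂))
              = (h (sec v₁) - x • cof (sec v₁)) + (h (sec v₂) - x • cof (sec v₂)) := by
            rw [map_add, smul_add]; abel
          rw [e]
          refine Submodule.add_mem _ ?_ ?_
          · rw [hdec (sec v₁)]; simpa using hdecJ' (sec v₁)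
          · rw [hdec (sec v₂)]; simpa using hdecJ' (sec v₂)
        have h2 := hw _ _ h1
        rw [map_add, map_add, hsec, hsec] at h2
        rw [← h2, hwspec (sec v₁), hwspec (sec v₂), hsec, hsec]
      have hwsmul : ∀ (a : k) (v : V), wfun (a • v) = a • wfun v := by
        intro a v
        obtain ⟨r, hr⟩ := hπsurj a
        have h1 : h (r • sec v) - x • (r • cof (sec v)) ∈ J' • (⊤ : Submodule R M) := by
          have e : h (r • sec v) - x • (r • cof (sec v)) = r • (h (sec v) - x • cof (sec v)) := by
            rw [hsmulR, smul_sub, smul_comm x r]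
          rw [e]
          refine Submodule.smul_mem _ _ ?_
          rw [hdec (sec v)]; simpa using hdecJ' (sec v)
        have h2 := hw _ _ h1
        rw [map_smulₛₗ, map_smulₛₗ, hr, hsec, hwspec (sec v), hsec] at h2
        exact h2.symm
      have hwequiv : ∀ (g : G) (v : V),
          wfun (MonoidAlgebra.of k G g • v) = MonoidAlgebra.of k G g • wfun v := by
        intro g v
        have h1 : h (MonoidAlgebra.of R G g • sec v) - x • (MonoidAlgebra.of R G g • cof (sec v))
            ∈ J' • (⊤ : Submodule R M) := by
          have e : h (MonoidAlgebra.of R G g • sec v) - x • (MonoidAlgebra.of R G g • cof (sec v))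
              = MonoidAlgebra.of R G g • (h (sec v) - x • cof (sec v)) := by
            rw [map_smul, smul_sub, smul_comm]
          rw [e]
          refine hgstab _ _ _ ?_
          rw [hdec (sec v)]; simpa using hdecJ' (sec v)
        have h2 := hw _ _ h1
        rw [hφequiv, hφequiv, hsec, hwspec (sec v), hsec] at h2
        exact h2.symm
      set W : V →ₗ[k] V :=
        { toFun := wfun
          map_add' := hwadd
          map_smul' := fun a v => by simp only [RingHom.id_apply]; exact hwsmul a v } with hWdef
      set Wbar : V →ₗ[MonoidAlgebra k G] V := mkEquivariant k G W hwequiv with hWbar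
      obtain ⟨a, haFTP⟩ := hV.2 Wbar
      obtain ⟨u, hu⟩ := ftp_eq_tr k G _ haFTP
      obtain ⟨ra, hra⟩ := hπsurj a
      -- lift u to M
      set util : M →ₗ[R] M := b.constr (S := ℕ) (fun t => sec (u (φ (b t)))) with hutil
      have hliftcomm : ∀ m : M, φ (util m) = u (φ m) := by
        intro m
        conv_lhs => rw [← b.linearCombination_repr m]
        conv_rhs => rw [← b.linearCombination_repr m]
        rw [Finsupp.linearCombination_apply]
        simp only [map_finsuppSum]
        refine Finsupp.sum_congr fun t _ => ?_
        rw [map_smul, map_smulₛₗ, map_smulₛₗ, map_smul]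
        congr 1
        rw [hutil, b.constr_basis, hsec]
      set T := trRG R G util with hT
      have hTφ : ∀ m : M, φ (T m) = Wbar (φ m) - a • φ m := by
        intro m
        rw [hT, trRG_apply, map_sum]
        have e : ∀ g : G, φ (MonoidAlgebra.of R G g • util (MonoidAlgebra.of R G g⁻¹ • m))
            = MonoidAlgebra.of k G g • u (MonoidAlgebra.of k G g⁻¹ • φ m) := by
          intro g
          rw [hφequiv, hliftcomm, hφequiv]
        rw [Finset.sum_congr rfl fun g _ => e g]
        have := (hu (φ m)).symm
        rwa [LinearMap.sub_apply, LinearMap.smul_apply, LinearMap.id_apply] at this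
      -- the remainder
      set h' : M →ₗ[MonoidAlgebra R G] M := h - (x * ra) • LinearMap.id - x • T with hh'
      have hh'mem : ∀ m : M, h' m ∈ J' • (⊤ : Submodule R M) := by
        intro m
        have e1 : h' m = (h m - x • cof m) + x • (cof m - ra • m - T m) := by
          rw [hh']
          simp only [LinearMap.sub_apply, LinearMap.smul_apply, LinearMap.id_apply]
          rw [smul_sub, smul_sub, ← mul_smul]
          abel
        have e2 : φ (cof m - ra • m - T m) = 0 := by
          rw [map_sub, map_sub, map_smulₛₗ, hTφ, hra, hwspec m]
          have : Wbar (φ m) = wfun (φ m) := rfl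
          rw [this]
          abel
        have e3 : cof m - ra • m - T m ∈ I • (⊤ : Submodule R M) := (hφker _).mp e2
        have e4 : x • (cof m - ra • m - T m) ∈ J' • (⊤ : Submodule R M) := by
          refine Submodule.smul_induction_on e3 ?_ ?_
          · intro r hr y _
            rw [smul_comm, ← smul_assoc, smul_eq_mul]
            have hmem : r * x ∈ J' := hIJle (Ideal.mul_mem_mul hr hxJ)
            exact Submodule.smul_mem_smul hmem trivial
          · intro y₁ y₂ hy₁ hy₂
            rw [smul_add]
            exact Submodule.add_mem _ hy₁ hy₂
        rw [e1]
        refine Submodule.add_mem _ ?_ e4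
        rw [hdec m]; simpa using hdecJ' m
      obtain ⟨r', hr'⟩ := IH J' hJ'lt h' hh'mem
      refine ⟨x * ra + r', ?_⟩
      have hxT : x • T = trRG R G (x • util) := by
        apply LinearMap.ext
        intro m
        rw [LinearMap.smul_apply, hT, trRG_apply, trRG_apply, Finset.smul_sum]
        refine Finset.sum_congr rfl fun g _ => ?_
        rw [LinearMap.smul_apply, smul_comm]
      have e : h - (x * ra + r') • (LinearMap.id : M →ₗ[MonoidAlgebra R G] M)
          = (h' - r' • LinearMap.id) + x • T := by
        rw [hh', add_smul]
        abel
      rw [e]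
      exact ftp_add hr' (hxT ▸ ftp_trRG R G b (x • util))
  obtain ⟨r, hr⟩ := key ⊤ f (fun m => by rw [Submodule.top_smul]; trivial)
  exact ⟨r, hr⟩
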